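/- If n points Q_1, …, Q_n in ℝ^d contain a minimal affinely dependent subset D of size δ ≤ d+1, then the set of ideal points {p_{ij} : Q_i, Q_j ∈ D} (directions of lines between pairs of points of D) spans a projective subspace of dimension exactly δ − 3, which is strictly less than min(δ−2, d−1); hence such a configuration fails ideal general position. -/

import Mathlib

/-- If among n points Q_1,…,Q_n in ℝ^d there is a minimal affinely
dependent subset D of size δ ≤ d+1 (with distinct points, so δ ≥ 3), then the ideal
points p_{ij} of the lines between pairs of points of D — whose projective span is the
ideal part of the affine span of D, i.e. the projectivization of the vector span of the
differences — span a projective subspace of dimension exactly δ − 3 (linear rank δ − 2),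
which is strictly less than min(δ−2, d−1); hence the configuration fails ideal general
position. -/
theorem stmt_17 (n d : ℕ) (Q : Fin n → EuclideanSpace ℝ (Fin d))
    (D : Finset (Fin n)) (δ : ℕ) (hδ : D.card = δ) (hδ3 : 3 ≤ δ) (hδd : δ ≤ d + 1)
    (hinj : Set.InjOn Q (D : Set (Fin n)))
    (hdep : ¬ AffineIndependent ℝ (fun i : (D : Set (Fin n)) => Q i))
    (hmin : ∀ i ∈ D,
        AffineIndependent ℝ (fun j : ((D.erase i : Finset (Fin n)) : Set (Fin n)) => Q j)) :
    Module.finrank ℝ (vectorSpan ℝ (Q '' (D : Set (Fin n)))) = δ - 2 ∧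
    (δ : ℤ) - 3 < min ((δ : ℤ) - 2) ((d : ℤ) - 1) := by
  classical
  constructor
  · have hrange : Set.range (fun i : (D : Set (Fin n)) => Q i) = Q '' (D : Set (Fin n)) :=
      (Set.image_eq_range Q (D : Set (Fin n))).symm
    have hcard : Fintype.card (D : Set (Fin n)) = (δ - 1) + 1 := by
      simp only [Finset.coe_sort_coe, Fintype.card_coe, hδ]; omega
    -- upper bound
    have hub : Module.finrank ℝ (vectorSpan ℝ (Q '' (D : Set (Fin n)))) ≤ δ - 1 := by
      rw [← hrange]
      exact finrank_vectorSpan_range_le ℝ _ hcard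
    have hne : Module.finrank ℝ (vectorSpan ℝ (Q '' (D : Set (Fin n)))) ≠ δ - 1 := by
      intro h
      apply hdep
      rw [affineIndependent_iff_finrank_vectorSpan_eq ℝ _ hcard, hrange]
      exact h
    -- lower bound
    obtain ⟨i, hi⟩ : ∃ i, i ∈ D := Finset.card_pos.mp (by omega)
    have hcard' : Fintype.card ((D.erase i : Finset (Fin n)) : Set (Fin n)) = (δ - 2) + 1 := by
      simp only [Finset.coe_sort_coe, Fintype.card_coe, Finset.card_erase_of_mem hi, hδ]; omega
    have hind := hmin i hi
    have hfr := hind.finrank_vectorSpan hcard'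
    have hrange' : Set.range (fun j : ((D.erase i : Finset (Fin n)) : Set (Fin n)) => Q j)
        = Q '' ((D.erase i : Finset (Fin n)) : Set (Fin n)) :=
      (Set.image_eq_range Q _).symm
    rw [hrange'] at hfr
    have hle : vectorSpan ℝ (Q '' ((D.erase i : Finset (Fin n)) : Set (Fin n)))
        ≤ vectorSpan ℝ (Q '' (D : Set (Fin n))) := by
      apply vectorSpan_mono
      exact Set.image_mono (by exact_mod_cast Finset.erase_subset i D)
    have hlb := Submodule.finrank_mono hle
    rw [hfr] at hlb
    omega
  · simp only [lt_min_iff]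
    constructor <;> omega
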